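/- For every real r > 0, every natural number n, and every real x, the differential relation ω_{n,r+1}(x) = (x/r)·ω_{n,r}'(x) + ω_{n,r}(x) holds, where ω_{n,r}' denotes the derivative of the polynomial ω_{n,r} with respect to x. In particular, for r = 1, ω_{n,2}(x) = x·ω_n'(x) + ω_n(x). -/

import Mathlib

open Finset MeasureTheory Real

/-- Stirling numbers of the second kind. -/
def stirling2 : ℕ → ℕ → ℕ
  | 0, 0 => 1
  | 0, _ + 1 => 0
  | _ + 1, 0 => 0
  | n + 1, k + 1 => (k + 1) * stirling2 n (k + 1) + stirling2 n k

/-- The generalized geometric polynomials `ω_{n,r}(x) = Σ_{k=0}^n S(n,k) (r)_k x^k`,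
where `(r)_k` is the rising factorial (Pochhammer symbol). -/
noncomputable def geomPoly (n : ℕ) (r x : ℝ) : ℝ :=
  ∑ k ∈ Finset.range (n + 1), (stirling2 n k : ℝ) * (ascPochhammer ℝ k).eval r * x ^ k

/-- The exponential polynomials `φ_n(x) = Σ_{k=0}^n S(n,k) x^k`. -/
noncomputable def expPoly (n : ℕ) (x : ℝ) : ℝ :=
  ∑ k ∈ Finset.range (n + 1), (stirling2 n k : ℝ) * x ^ k

lemma geomPoly_deriv_rec_aux (r : ℝ) (hr : 0 < r) (n : ℕ) (x : ℝ) :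
    geomPoly n (r + 1) x = x / r * deriv (geomPoly n r) x + geomPoly n r x := by
  have hD : HasDerivAt (geomPoly n r)
      (∑ k ∈ Finset.range (n + 1),
        (stirling2 n k : ℝ) * (ascPochhammer ℝ k).eval r * (k * x ^ (k - 1))) x := by
    have : HasDerivAt (fun y : ℝ => ∑ k ∈ Finset.range (n + 1),
        (stirling2 n k : ℝ) * (ascPochhammer ℝ k).eval r * y ^ k)
        (∑ k ∈ Finset.range (n + 1),
          (stirling2 n k : ℝ) * (ascPochhammer ℝ k).eval r * (k * x ^ (k - 1))) x := by
      apply HasDerivAt.fun_sum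
      intro k _
      exact (hasDerivAt_pow k x).const_mul _
    exact this
  rw [hD.deriv, Finset.mul_sum, geomPoly, geomPoly, ← Finset.sum_add_distrib]
  refine Finset.sum_congr rfl fun k _ => ?_
  rcases k with _ | k
  · simp
  · have hpoch : r * (ascPochhammer ℝ (k + 1)).eval (r + 1)
        = (ascPochhammer ℝ (k + 1)).eval r * (r + (k + 1)) := by
      have h1 := ascPochhammer_succ_eval (k + 1) r
      have h2 : Polynomial.eval r (ascPochhammer ℝ (k + 2))
          = r * Polynomial.eval (r + 1) (ascPochhammer ℝ (k + 1)) := by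
        rw [ascPochhammer_succ_left]
        simp [Polynomial.eval_comp]
      rw [← h2, h1]
      push_cast
      ring
    push_cast at hpoch ⊢
    field_simp
    linear_combination ((stirling2 n (k + 1) : ℝ) * x ^ (k + 1)) * hpoch

theorem geomPoly_deriv_rec (r : ℝ) (hr : 0 < r) (n : ℕ) :
    (∀ x : ℝ, geomPoly n (r + 1) x = x / r * deriv (geomPoly n r) x + geomPoly n r x) ∧
    (∀ x : ℝ, geomPoly n 2 x = x * deriv (geomPoly n 1) x + geomPoly n 1 x) := by
  constructor
  · exact geomPoly_deriv_rec_aux r hr n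
  · intro x
    have h := geomPoly_deriv_rec_aux 1 one_pos n x
    norm_num at h
    convert h using 2
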